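/- Let X be an N×N complex Hermitian positive semidefinite matrix and let v ∈ ℂ^N be a unit vector (‖v‖ = 1). Then ‖X v − (v* X v) v‖² ≤ (v* X v) · ( Tr(X) − v* X v ). -/

import Mathlib

open Matrix ComplexOrder

lemma cs_complex (N : ℕ) (f g : Fin N → ℂ) :
    Complex.normSq (∑ i, f i * g i) ≤
      (∑ i, Complex.normSq (f i)) * (∑ i, Complex.normSq (g i)) := by
  have h1 : ‖∑ i, f i * g i‖ ≤ ∑ i, ‖f i‖ * ‖g i‖ := by
    calc ‖∑ i, f i * g i‖ ≤ ∑ i, ‖f i * g i‖ := by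
          simpa using
            norm_sum_le (Finset.univ : Finset (Fin N)) (fun i => f i * g i)
      _ = ∑ i, ‖f i‖ * ‖g i‖ := by
          simp [norm_mul]
  have h2 : (∑ i, ‖f i‖ * ‖g i‖) ^ 2 ≤
      (∑ i, ‖f i‖ ^ 2) * (∑ i, ‖g i‖ ^ 2) :=
    Finset.sum_mul_sq_le_sq_mul_sq _ _ _
  calc Complex.normSq (∑ i, f i * g i) = ‖∑ i, f i * g i‖ ^ 2 :=
        (Complex.sq_norm _).symm
    _ ≤ (∑ i, ‖f i‖ * ‖g i‖) ^ 2 := by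
        apply pow_le_pow_left₀ (norm_nonneg _) h1
    _ ≤ (∑ i, ‖f i‖ ^ 2) * (∑ i, ‖g i‖ ^ 2) := h2
    _ = (∑ i, Complex.normSq (f i)) * (∑ i, Complex.normSq (g i)) := by
        simp [Complex.sq_norm]

theorem stmt_10 (N : ℕ) (X : Matrix (Fin N) (Fin N) ℂ) (hX : X.PosSemidef)
    (v : Fin N → ℂ) (hv : ∑ i, Complex.normSq (v i) = 1) :
    ∑ i, Complex.normSq ((X *ᵥ v - (star v ⬝ᵥ (X *ᵥ v)) • v) i) ≤
      (star v ⬝ᵥ (X *ᵥ v)).re * (X.trace.re - (star v ⬝ᵥ (X *ᵥ v)).re) := by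
  obtain ⟨B, hB⟩ : ∃ B : Matrix (Fin N) (Fin N) ℂ, X = Bᴴ * B := by
    open scoped MatrixOrder in
    exact CStarAlgebra.nonneg_iff_eq_star_mul_self.mp hX.nonneg
  set w : Fin N → ℂ := B *ᵥ v with hw
  set u : Fin N → ℂ := X *ᵥ v with hu
  set α : ℂ := star v ⬝ᵥ u with hα
  have hαw : α = ((∑ i, Complex.normSq (w i) : ℝ) : ℂ) := by
    rw [hα, hu, hB, ← Matrix.mulVec_mulVec, Matrix.dotProduct_mulVec, ← Matrix.star_mulVec]
    push_cast
    simp [dotProduct, Complex.normSq_eq_conj_mul_self, hw]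
  set a : ℝ := α.re with ha
  have haw : a = ∑ i, Complex.normSq (w i) := by
    rw [ha, hαw]; simp
  have hαre : (a : ℝ) = α.re := rfl
  have hαeq : ((a : ℝ) : ℂ) = α := by rw [ha, hαw]; simp
  -- trace
  have htr : X.trace.re = ∑ j, ∑ i, Complex.normSq (B i j) := by
    have : X.trace = ((∑ j, ∑ i, Complex.normSq (B i j) : ℝ) : ℂ) := by
      rw [hB, Matrix.trace]
      push_cast
      simp [Matrix.diag, Matrix.mul_apply, Complex.normSq_eq_conj_mul_self]
    rw [this]; simp
  -- expand LHS
  have hα2 : ∑ i, Complex.normSq ((u - α • v) i) = (∑ i, Complex.normSq (u i)) - a ^ 2 := by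
    have expand : ∀ i, Complex.normSq ((u - α • v) i) =
        Complex.normSq (u i) + Complex.normSq α * Complex.normSq (v i)
          - 2 * (u i * (starRingEnd ℂ) (α * v i)).re := by
      intro i
      simp only [Pi.sub_apply, Pi.smul_apply, smul_eq_mul]
      rw [Complex.normSq_sub, Complex.normSq_mul]
    have hsum : ∑ i, u i * (starRingEnd ℂ) (α * v i) = α * (starRingEnd ℂ) α := by
      have h1 : ∀ i, u i * (starRingEnd ℂ) (α * v i) =
          (starRingEnd ℂ) α * ((starRingEnd ℂ) (v i) * u i) := by
        intro i; rw [_root_.map_mul]; ring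
      rw [Finset.sum_congr rfl fun i _ => h1 i, ← Finset.mul_sum]
      have h2 : (∑ i, (starRingEnd ℂ) (v i) * u i) = α := by
        simp [hα, dotProduct]
      rw [h2, mul_comm]
    have hre : ∑ i, (u i * (starRingEnd ℂ) (α * v i)).re = a ^ 2 := by
      rw [← Complex.re_sum, hsum, ← hαeq]
      simp [Complex.conj_ofReal, ← Complex.ofReal_mul, pow_two]
    have hnormα : Complex.normSq α = a ^ 2 := by
      rw [← hαeq]; simp [Complex.normSq_ofReal, pow_two]
    rw [Finset.sum_congr rfl fun i _ => expand i, Finset.sum_sub_distrib,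
      Finset.sum_add_distrib, ← Finset.mul_sum, hv, hnormα, ← Finset.mul_sum, hre]
    ring
  -- key bound
  have hkey : ∑ i, Complex.normSq (u i) ≤ X.trace.re * a := by
    have hui : ∀ i, u i = ∑ j, (starRingEnd ℂ) (B j i) * w j := by
      intro i
      rw [hu, hB, ← Matrix.mulVec_mulVec]
      simp [Matrix.mulVec, dotProduct, Matrix.conjTranspose_apply, hw]
    calc ∑ i, Complex.normSq (u i)
        ≤ ∑ i, (∑ j, Complex.normSq (B j i)) * (∑ j, Complex.normSq (w j)) := by
          apply Finset.sum_le_sum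
          intro i _
          rw [hui i]
          simpa using cs_complex N (fun j => (starRingEnd ℂ) (B j i)) w
      _ = X.trace.re * a := by
          rw [← Finset.sum_mul, htr, haw]
  have ha0 : 0 ≤ a := by
    rw [haw]; exact Finset.sum_nonneg fun i _ => Complex.normSq_nonneg _
  calc ∑ i, Complex.normSq ((u - α • v) i) = (∑ i, Complex.normSq (u i)) - a ^ 2 := hα2
    _ ≤ X.trace.re * a - a ^ 2 := by linarith
    _ = a * (X.trace.re - a) := by ring
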